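/- As f → +∞, the average velocity satisfies V(f) = f·(1 − (1/f²)·∫₀¹ (φ'(x))² dx) + O(1/f²); that is, V(f) − f + (1/f)·∫₀¹ (φ'(x))² dx is O(f⁻²) as f → +∞. -/

import Mathlib

open MeasureTheory intervalIntegral Asymptotics Filter

noncomputable def w0 (φ : ℝ → ℝ) (f x : ℝ) : ℝ :=
  ∫ s in (0:ℝ)..1, Real.exp (φ (x + s) - φ x - f * s)

noncomputable def M0 (φ : ℝ → ℝ) (f : ℝ) : ℝ := ∫ x in (0:ℝ)..1, w0 φ f x

noncomputable def w1 (φ : ℝ → ℝ) (f x : ℝ) : ℝ :=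
  ∫ s in (0:ℝ)..1, (w0 φ f (x + s)) ^ 2 * Real.exp (φ (x + s) - φ x - f * s)

noncomputable def M1 (φ : ℝ → ℝ) (f : ℝ) : ℝ := ∫ x in (0:ℝ)..1, w1 φ f x

/-! ### Auxiliary lemmas -/

lemma aux_periodic_deriv (g : ℝ → ℝ) (h : ∀ x, g (x + 1) = g x) :
    ∀ x, deriv g (x + 1) = deriv g x := by
  intro x
  have hg : (fun y => g (y + 1)) = g := funext h
  calc deriv g (x + 1) = deriv (fun y => g (y + 1)) x := (deriv_comp_add_const g 1 x).symm
    _ = deriv g x := by rw [hg]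

lemma aux_bound_of_periodic (g : ℝ → ℝ) (hp : ∀ x, g (x + 1) = g x) (hc : Continuous g) :
    ∃ K : ℝ, 0 ≤ K ∧ ∀ x, |g x| ≤ K := by
  have hper : Function.Periodic g 1 := hp
  obtain ⟨K, hK⟩ := isBounded_iff_forall_norm_le.mp
    (hper.isBounded_of_continuous one_ne_zero hc)
  exact ⟨K, le_trans (abs_nonneg _) (hK _ ⟨0, rfl⟩), fun x => hK _ ⟨x, rfl⟩⟩

lemma aux_ibp_step (φ : ℝ → ℝ) (hφd : ∀ y, HasDerivAt φ (deriv φ y) y)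
    (hφc : Continuous φ) (hφ'c : Continuous (deriv φ))
    (ψ ψ' : ℝ → ℝ) (hψ : ∀ y, HasDerivAt ψ (ψ' y) y) (hψc : Continuous ψ)
    (hψ'c : Continuous ψ')
    (hper : ∀ y, φ (y + 1) = φ y) (hψper : ∀ y, ψ (y + 1) = ψ y)
    (f x : ℝ) (hf : f ≠ 0) :
    ∫ s in (0:ℝ)..1, ψ (x + s) * Real.exp (φ (x + s) - φ x - f * s)
      = ψ x * (1 - Real.exp (-f)) / f
        + (1 / f) * ∫ s in (0:ℝ)..1,
            (ψ' (x + s) + ψ (x + s) * deriv φ (x + s))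
              * Real.exp (φ (x + s) - φ x - f * s) := by
  set u : ℝ → ℝ := fun s => ψ (x + s) * Real.exp (φ (x + s) - φ x) with hu_def
  set u' : ℝ → ℝ := fun s => (ψ' (x + s) + ψ (x + s) * deriv φ (x + s))
      * Real.exp (φ (x + s) - φ x) with hu'_def
  set v : ℝ → ℝ := fun s => -Real.exp (-(f * s)) / f with hv_def
  set v' : ℝ → ℝ := fun s => Real.exp (-(f * s)) with hv'_def
  have hadd : ∀ s : ℝ, HasDerivAt (fun t : ℝ => x + t) 1 s := fun s => by
    simpa using (hasDerivAt_id s).const_add x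
  have hu : ∀ s : ℝ, HasDerivAt u (u' s) s := by
    intro s
    have h1 : HasDerivAt (fun t => ψ (x + t)) (ψ' (x + s)) s := by
      have := (hψ (x + s)).comp s (hadd s); rw [mul_one] at this; exact this
    have h2 : HasDerivAt (fun t => Real.exp (φ (x + t) - φ x))
        (Real.exp (φ (x + s) - φ x) * deriv φ (x + s)) s := by
      have : HasDerivAt (fun t => φ (x + t) - φ x) (deriv φ (x + s)) s := by
        simpa using ((hφd (x + s)).comp s (hadd s)).sub_const (φ x)
      simpa [mul_comm] using this.exp
    have := h1.mul h2
    rw [show u' s = ψ' (x + s) * Real.exp (φ (x + s) - φ x)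
        + ψ (x + s) * (Real.exp (φ (x + s) - φ x) * deriv φ (x + s)) by simp only [hu'_def]; ring]
    exact this
  have hv : ∀ s : ℝ, HasDerivAt v (v' s) s := by
    intro s
    have h1 : HasDerivAt (fun t => -(f * t)) (-f) s := by
      have := ((hasDerivAt_id' s).const_mul f).neg; rw [mul_one] at this; exact this
    have h2 := h1.exp
    have h3 := h2.neg.div_const f
    rw [show v' s = -(Real.exp (-(f * s)) * -f) / f by
      simp only [hv'_def]; rw [mul_neg, neg_neg, mul_div_assoc, div_self hf, mul_one]]
    exact h3
  have hcu' : Continuous u' := by fun_prop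
  have hcv' : Continuous v' := by fun_prop
  have key := integral_mul_deriv_eq_deriv_mul_of_hasDerivAt
    (u := u) (v := v) (u' := u') (v' := v') (a := (0:ℝ)) (b := 1)
    (Continuous.continuousOn (by fun_prop)) (Continuous.continuousOn (by fun_prop))
    (fun s _ => hu s) (fun s _ => hv s)
    (hcu'.intervalIntegrable 0 1) (hcv'.intervalIntegrable 0 1)
  have e1 : ∀ s : ℝ, ψ (x + s) * Real.exp (φ (x + s) - φ x - f * s) = u s * v' s := by
    intro s
    simp only [hu_def, hv'_def]
    rw [show φ (x + s) - φ x - f * s = (φ (x + s) - φ x) + -(f * s) by ring, Real.exp_add]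
    ring
  have e2 : ∀ s : ℝ, (ψ' (x + s) + ψ (x + s) * deriv φ (x + s))
      * Real.exp (φ (x + s) - φ x - f * s) = u' s * v' s := by
    intro s
    simp only [hu'_def, hv'_def]
    rw [show φ (x + s) - φ x - f * s = (φ (x + s) - φ x) + -(f * s) by ring, Real.exp_add]
    ring
  calc ∫ s in (0:ℝ)..1, ψ (x + s) * Real.exp (φ (x + s) - φ x - f * s)
      = ∫ s in (0:ℝ)..1, u s * v' s :=
        intervalIntegral.integral_congr (fun s _ => e1 s)
    _ = u 1 * v 1 - u 0 * v 0 - ∫ s in (0:ℝ)..1, u' s * v s := key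
    _ = ψ x * (1 - Real.exp (-f)) / f + (1 / f) * ∫ s in (0:ℝ)..1, u' s * v' s := by
        have hb : u 1 * v 1 - u 0 * v 0 = ψ x * (1 - Real.exp (-f)) / f := by
          simp only [hu_def, hv_def]
          rw [hψper x, hper x]
          simp only [add_zero, mul_zero, neg_zero, Real.exp_zero, mul_one, sub_self]
          field_simp
          ring
        rw [hb]
        rw [show ∫ s in (0:ℝ)..1, u' s * v s = ∫ s in (0:ℝ)..1, (-(1/f)) * (u' s * v' s) from
          intervalIntegral.integral_congr (fun s _ => by
            simp only [hv_def, hv'_def]; ring)]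
        rw [intervalIntegral.integral_const_mul]
        ring
    _ = ψ x * (1 - Real.exp (-f)) / f + (1 / f) * ∫ s in (0:ℝ)..1,
          (ψ' (x + s) + ψ (x + s) * deriv φ (x + s)) * Real.exp (φ (x + s) - φ x - f * s) := by
        rw [intervalIntegral.integral_congr (fun s _ => e2 s)]

noncomputable def auxJ (φ : ℝ → ℝ) (y : ℝ) : ℝ :=
  (deriv (deriv (deriv φ)) y
    + (deriv (deriv φ) y * deriv φ y + deriv φ y * deriv (deriv φ) y))
   + (deriv (deriv φ) y + deriv φ y * deriv φ y) * deriv φ y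

noncomputable def auxE (φ : ℝ → ℝ) (f : ℝ) : ℝ :=
  ∫ x in (0:ℝ)..1, ∫ s in (0:ℝ)..1, auxJ φ (x + s) * Real.exp (φ (x + s) - φ x - f * s)

lemma aux_w0_expand (φ : ℝ → ℝ)
    (hd0 : Differentiable ℝ φ) (hd1 : Differentiable ℝ (deriv φ))
    (hd2 : Differentiable ℝ (deriv (deriv φ)))
    (c3 : Continuous (deriv (deriv (deriv φ))))
    (hper : ∀ y, φ (y + 1) = φ y) (f x : ℝ) (hf : f ≠ 0) :
    w0 φ f x = (1 - Real.exp (-f)) / f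
      + deriv φ x * ((1 - Real.exp (-f)) / f ^ 2)
      + (deriv (deriv φ) x + deriv φ x * deriv φ x) * ((1 - Real.exp (-f)) / f ^ 3)
      + (∫ s in (0:ℝ)..1,
          auxJ φ (x + s) * Real.exp (φ (x + s) - φ x - f * s)) / f ^ 3 := by
  unfold auxJ
  have c0 : Continuous φ := hd0.continuous
  have c1 : Continuous (deriv φ) := hd1.continuous
  have c2 : Continuous (deriv (deriv φ)) := hd2.continuous
  have p1 : ∀ y, deriv φ (y + 1) = deriv φ y := aux_periodic_deriv φ hper
  have p2 : ∀ y, deriv (deriv φ) (y + 1) = deriv (deriv φ) y := aux_periodic_deriv _ p1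
  have hD0 : ∀ y, HasDerivAt φ (deriv φ y) y := fun y => (hd0 y).hasDerivAt
  -- step 1 : ψ = 1
  have step1 := aux_ibp_step φ hD0 c0 c1 (fun _ => (1:ℝ)) (fun _ => (0:ℝ))
    (fun y => hasDerivAt_const y 1) continuous_const continuous_const hper
    (fun y => rfl) f x hf
  -- step 2 : ψ = deriv φ
  have step2 := aux_ibp_step φ hD0 c0 c1 (deriv φ) (deriv (deriv φ))
    (fun y => (hd1 y).hasDerivAt) c1 c2 hper p1 f x hf
  -- step 3 : ψ = φ'' + φ'·φ'
  have step3 := aux_ibp_step φ hD0 c0 c1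
    (fun y => deriv (deriv φ) y + deriv φ y * deriv φ y)
    (fun y => deriv (deriv (deriv φ)) y
      + (deriv (deriv φ) y * deriv φ y + deriv φ y * deriv (deriv φ) y))
    (fun y => ((hd2 y).hasDerivAt).add (((hd1 y).hasDerivAt).mul ((hd1 y).hasDerivAt)))
    (by fun_prop) (by fun_prop) hper
    (fun y => by beta_reduce; rw [p1 y, p2 y]) f x hf
  have e0 : w0 φ f x = ∫ s in (0:ℝ)..1,
      (fun _ => (1:ℝ)) (x + s) * Real.exp (φ (x + s) - φ x - f * s) := by
    unfold w0
    exact intervalIntegral.integral_congr (fun s _ => by simp)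
  have e1 : (∫ s in (0:ℝ)..1,
      ((fun _ => (0:ℝ)) (x + s) + (fun _ => (1:ℝ)) (x + s) * deriv φ (x + s))
        * Real.exp (φ (x + s) - φ x - f * s))
      = ∫ s in (0:ℝ)..1, deriv φ (x + s) * Real.exp (φ (x + s) - φ x - f * s) :=
    intervalIntegral.integral_congr (fun s _ => by simp)
  rw [e0, step1, e1, step2, step3]
  ring

open Set in
section



lemma aux_exp_int (f : ℝ) (hf : f ≠ 0) :
    ∫ s in (0:ℝ)..1, Real.exp (-(f * s)) = (1 - Real.exp (-f)) / f := by
  have hv : ∀ s ∈ Set.uIcc (0:ℝ) 1,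
      HasDerivAt (fun t => -Real.exp (-(f * t)) / f) (Real.exp (-(f * s))) s := by
    intro s _
    have h1 : HasDerivAt (fun t => -(f * t)) (-f) s := by
      have := ((hasDerivAt_id' s).const_mul f).neg; rw [mul_one] at this; exact this
    have h3 := h1.exp.neg.div_const f
    rw [show Real.exp (-(f * s)) = -(Real.exp (-(f * s)) * -f) / f by
      rw [mul_neg, neg_neg, mul_div_assoc, div_self hf, mul_one]]
    exact h3
  rw [intervalIntegral.integral_eq_sub_of_hasDerivAt hv
    ((by fun_prop : Continuous fun s => Real.exp (-(f * s))).intervalIntegrable 0 1)]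
  field_simp
  rw [mul_zero, neg_zero, Real.exp_zero]; ring

lemma aux_E_bound (φ : ℝ → ℝ)
    (c0 : Continuous φ) (cJ : Continuous (auxJ φ))
    (hper : ∀ y, φ (y + 1) = φ y) (pJ : ∀ y, auxJ φ (y + 1) = auxJ φ y) :
    ∃ K : ℝ, 0 ≤ K ∧ ∀ f : ℝ, 0 < f → |auxE φ f| ≤ K / f := by
  obtain ⟨B, hB0, hB⟩ := aux_bound_of_periodic φ hper c0
  obtain ⟨KJ, hKJ0, hKJ⟩ := aux_bound_of_periodic (auxJ φ) pJ cJ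
  refine ⟨KJ * Real.exp (2 * B), by positivity, fun f hf => ?_⟩
  have hfne : f ≠ 0 := ne_of_gt hf
  set K := KJ * Real.exp (2 * B) with hK
  have inner : ∀ x : ℝ,
      |∫ s in (0:ℝ)..1, auxJ φ (x + s) * Real.exp (φ (x + s) - φ x - f * s)| ≤ K / f := by
    intro x
    have hptwise : ∀ s ∈ Icc (0:ℝ) 1,
        |auxJ φ (x + s) * Real.exp (φ (x + s) - φ x - f * s)|
          ≤ K * Real.exp (-(f * s)) := by
      intro s _
      rw [abs_mul, abs_of_pos (Real.exp_pos _)]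
      have h1 : Real.exp (φ (x + s) - φ x - f * s)
          = Real.exp (φ (x + s) - φ x) * Real.exp (-(f * s)) := by
        rw [← Real.exp_add]; ring_nf
      rw [h1, ← mul_assoc]
      have h2 : Real.exp (φ (x + s) - φ x) ≤ Real.exp (2 * B) := by
        apply Real.exp_le_exp.mpr
        have := hB (x + s); have := hB x
        have h3 := abs_le.mp (hB (x + s))
        have h4 := abs_le.mp (hB x)
        linarith [h3.1, h3.2, h4.1, h4.2]
      have h5 : |auxJ φ (x + s)| * Real.exp (φ (x + s) - φ x) ≤ K := by
        calc |auxJ φ (x + s)| * Real.exp (φ (x + s) - φ x)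
            ≤ KJ * Real.exp (2 * B) := by
              apply mul_le_mul (hKJ _) h2 (le_of_lt (Real.exp_pos _)) hKJ0
          _ = K := rfl
      exact mul_le_mul_of_nonneg_right h5 (le_of_lt (Real.exp_pos _))
    calc |∫ s in (0:ℝ)..1, auxJ φ (x + s) * Real.exp (φ (x + s) - φ x - f * s)|
        ≤ ∫ s in (0:ℝ)..1, |auxJ φ (x + s) * Real.exp (φ (x + s) - φ x - f * s)| :=
          intervalIntegral.abs_integral_le_integral_abs zero_le_one
      _ ≤ ∫ s in (0:ℝ)..1, K * Real.exp (-(f * s)) := by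
          apply intervalIntegral.integral_mono_on zero_le_one
            ((by fun_prop : Continuous fun s =>
              |auxJ φ (x + s) * Real.exp (φ (x + s) - φ x - f * s)|).intervalIntegrable 0 1)
            ((by fun_prop : Continuous fun s =>
              K * Real.exp (-(f * s))).intervalIntegrable 0 1) hptwise
      _ = K * ((1 - Real.exp (-f)) / f) := by
          rw [intervalIntegral.integral_const_mul, aux_exp_int f hfne]
      _ ≤ K / f := by
          have h1 : 1 - Real.exp (-f) ≤ 1 := by
            have := Real.exp_pos (-f); linarith
          have hK0 : 0 ≤ K := by positivity
          have h2 : K * (1 - Real.exp (-f)) ≤ K := by nlinarith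
          calc K * ((1 - Real.exp (-f)) / f) = K * (1 - Real.exp (-f)) / f := by ring
            _ ≤ K / f := by gcongr
  have : ‖∫ x in (0:ℝ)..1, ∫ s in (0:ℝ)..1,
      auxJ φ (x + s) * Real.exp (φ (x + s) - φ x - f * s)‖ ≤ (K / f) * |1 - 0| := by
    apply intervalIntegral.norm_integral_le_of_norm_le_const
    intro x _
    rw [Real.norm_eq_abs]
    exact inner x
  unfold auxE
  rw [Real.norm_eq_abs] at this
  simpa using this

end


lemma aux_M0_eq (φ : ℝ → ℝ)
    (hd0 : Differentiable ℝ φ) (hd1 : Differentiable ℝ (deriv φ))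
    (hd2 : Differentiable ℝ (deriv (deriv φ)))
    (c3 : Continuous (deriv (deriv (deriv φ))))
    (hper : ∀ y, φ (y + 1) = φ y) (f : ℝ) (hf : f ≠ 0) :
    M0 φ f = (1 - Real.exp (-f)) / f
      + (∫ x in (0:ℝ)..1, (deriv φ x) ^ 2) * ((1 - Real.exp (-f)) / f ^ 3)
      + auxE φ f / f ^ 3 := by
  have c0 : Continuous φ := hd0.continuous
  have c1 : Continuous (deriv φ) := hd1.continuous
  have c2 : Continuous (deriv (deriv φ)) := hd2.continuous
  have cJ : Continuous (auxJ φ) := by unfold auxJ; fun_prop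
  have p1 : ∀ y, deriv φ (y + 1) = deriv φ y := aux_periodic_deriv φ hper
  set A := 1 - Real.exp (-f) with hA
  have i1 : IntervalIntegrable (fun _ : ℝ => A / f) volume 0 1 := intervalIntegrable_const
  have i2 : IntervalIntegrable (fun x => deriv φ x * (A / f ^ 2)) volume 0 1 :=
    (c1.mul continuous_const).intervalIntegrable 0 1
  have i3 : IntervalIntegrable
      (fun x => (deriv (deriv φ) x + deriv φ x * deriv φ x) * (A / f ^ 3)) volume 0 1 :=
    (((c2.add (c1.mul c1)).mul continuous_const)).intervalIntegrable 0 1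
  have i4c : Continuous fun x : ℝ =>
      ∫ s in (0:ℝ)..1, auxJ φ (x + s) * Real.exp (φ (x + s) - φ x - f * s) := by
    apply intervalIntegral.continuous_parametric_intervalIntegral_of_continuous'
      (μ := volume) (f := fun x s => auxJ φ (x + s) * Real.exp (φ (x + s) - φ x - f * s))
    show Continuous fun p : ℝ × ℝ =>
      auxJ φ (p.1 + p.2) * Real.exp (φ (p.1 + p.2) - φ p.1 - f * p.2)
    fun_prop
  have i4 : IntervalIntegrable (fun x =>
      (∫ s in (0:ℝ)..1, auxJ φ (x + s) * Real.exp (φ (x + s) - φ x - f * s)) / f ^ 3)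
      volume 0 1 := (i4c.div_const _).intervalIntegrable 0 1
  unfold M0
  rw [intervalIntegral.integral_congr (fun x _ => aux_w0_expand φ hd0 hd1 hd2 c3 hper f x hf)]
  rw [intervalIntegral.integral_add ((i1.add i2).add i3) i4,
    intervalIntegral.integral_add (i1.add i2) i3,
    intervalIntegral.integral_add i1 i2]
  have e1 : (∫ _ in (0:ℝ)..1, A / f) = A / f := by simp
  have ederiv : (∫ x in (0:ℝ)..1, deriv φ x) = 0 := by
    rw [intervalIntegral.integral_deriv_eq_sub (fun x _ => hd0 x) (c1.intervalIntegrable 0 1)]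
    have : φ 1 = φ 0 := by simpa using hper 0
    rw [this, sub_self]
  have e2 : (∫ x in (0:ℝ)..1, deriv φ x * (A / f ^ 2)) = 0 := by
    rw [intervalIntegral.integral_mul_const, ederiv, zero_mul]
  have ederiv2 : (∫ x in (0:ℝ)..1, deriv (deriv φ) x) = 0 := by
    rw [intervalIntegral.integral_deriv_eq_sub (fun x _ => hd1 x) (c2.intervalIntegrable 0 1)]
    have : deriv φ 1 = deriv φ 0 := by simpa using p1 0
    rw [this, sub_self]
  have e3 : (∫ x in (0:ℝ)..1, (deriv (deriv φ) x + deriv φ x * deriv φ x) * (A / f ^ 3))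
      = (∫ x in (0:ℝ)..1, (deriv φ x) ^ 2) * (A / f ^ 3) := by
    rw [intervalIntegral.integral_mul_const,
      intervalIntegral.integral_add (c2.intervalIntegrable 0 1)
        ((show Continuous fun x => deriv φ x * deriv φ x from c1.mul c1).intervalIntegrable 0 1), ederiv2, zero_add]
    congr 1
    exact intervalIntegral.integral_congr (fun x _ => (sq (deriv φ x)).symm)
  have e4 : (∫ x in (0:ℝ)..1,
      (∫ s in (0:ℝ)..1, auxJ φ (x + s) * Real.exp (φ (x + s) - φ x - f * s)) / f ^ 3)
      = auxE φ f / f ^ 3 := by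
    rw [intervalIntegral.integral_div]
    rfl
  rw [e1, e2, e3, e4, add_zero]

set_option maxHeartbeats 1600000 in
/-- As `f → +∞`, the average velocity `V(f) = (1 − e^{−f})/M₀(f)`
satisfies `V(f) = f·(1 − (1/f²)·∫₀¹ (φ'(x))² dx) + O(1/f²)`. -/
theorem stmt_16 (φ : ℝ → ℝ) (hφ : ContDiff ℝ 3 φ) (hφper : ∀ x, φ (x + 1) = φ x)
    (V : ℝ → ℝ) (hV : ∀ f, V f = (1 - Real.exp (-f)) / M0 φ f) :
    (fun f => V f - f + (1 / f) * ∫ x in (0:ℝ)..1, (deriv φ x) ^ 2)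
      =O[atTop] (fun f => 1 / f ^ 2) := by
  -- regularity bookkeeping
  have h3 : ContDiff ℝ ((2:ℕ) + 1) φ := by exact_mod_cast hφ
  obtain ⟨hd0, -, h2'⟩ := contDiff_succ_iff_deriv.mp h3
  have h2 : ContDiff ℝ ((1:ℕ) + 1) (deriv φ) := by exact_mod_cast h2'
  obtain ⟨hd1, -, h1'⟩ := contDiff_succ_iff_deriv.mp h2
  have h1 : ContDiff ℝ ((0:ℕ) + 1) (deriv (deriv φ)) := by exact_mod_cast h1'
  obtain ⟨hd2, -, h0⟩ := contDiff_succ_iff_deriv.mp h1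
  have c0 : Continuous φ := hd0.continuous
  have c1 : Continuous (deriv φ) := hd1.continuous
  have c2 : Continuous (deriv (deriv φ)) := hd2.continuous
  have c3 : Continuous (deriv (deriv (deriv φ))) := h0.continuous
  have p1 : ∀ y, deriv φ (y + 1) = deriv φ y := aux_periodic_deriv φ hφper
  have p2 : ∀ y, deriv (deriv φ) (y + 1) = deriv (deriv φ) y := aux_periodic_deriv _ p1
  have p3 : ∀ y, deriv (deriv (deriv φ)) (y + 1) = deriv (deriv (deriv φ)) y :=
    aux_periodic_deriv _ p2
  have cJ : Continuous (auxJ φ) := by unfold auxJ; fun_prop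
  have pJ : ∀ y, auxJ φ (y + 1) = auxJ φ y := fun y => by
    unfold auxJ; rw [p1 y, p2 y, p3 y]
  obtain ⟨K, hK0, hK⟩ := aux_E_bound φ c0 cJ hφper pJ
  obtain ⟨C, hC⟩ : ∃ C : ℝ, C = ∫ x in (0:ℝ)..1, (deriv φ x) ^ 2 := ⟨_, rfl⟩
  simp only [← hC]
  rw [isBigO_iff]
  refine ⟨4 * (C ^ 2 + |C| * K + K), ?_⟩
  filter_upwards [eventually_ge_atTop (max 2 (2 * (|C| + K + 1)))] with f hf
  have hf2 : (2:ℝ) ≤ f := le_trans (le_max_left _ _) hf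
  have hfK : 2 * (|C| + K + 1) ≤ f := le_trans (le_max_right _ _) hf
  have hf0 : 0 < f := by linarith
  have hfne : f ≠ 0 := ne_of_gt hf0
  obtain ⟨e, he_def⟩ : ∃ e : ℝ, e = auxE φ f := ⟨_, rfl⟩
  have he : |e| ≤ K / f := he_def ▸ hK f hf0
  have heK : |e| ≤ K := le_trans he (by
    rw [div_le_iff₀ hf0]; nlinarith)
  set A := 1 - Real.exp (-f) with hA_def
  have hA_le : A ≤ 1 := by have := Real.exp_pos (-f); rw [hA_def]; linarith
  have hA_ge : (1:ℝ)/2 ≤ A := by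
    have hexp : Real.exp (-f) ≤ Real.exp (-2) := Real.exp_le_exp.mpr (by linarith)
    have h4 : (2:ℝ) ≤ Real.exp 2 := by nlinarith [Real.add_one_le_exp (2:ℝ)]
    have h5 : Real.exp (-2) ≤ 1/2 := by
      rw [Real.exp_neg]
      calc (Real.exp 2)⁻¹ ≤ 2⁻¹ := by gcongr
        _ = 1/2 := by norm_num
    rw [hA_def]; linarith
  have hA_abs : |A| ≤ 1 := abs_le.mpr ⟨by linarith, hA_le⟩
  have hm' : M0 φ f = (A * f ^ 2 + (C * A + e)) / f ^ 3 := by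
    rw [aux_M0_eq φ hd0 hd1 hd2 c3 hφper f hfne, ← hC, ← he_def, ← hA_def]
    field_simp
    ring
  have hCK : -(|C| + K) ≤ C * A + e := by
    have h6 : -(|C|) ≤ C * A := by
      have := abs_mul C A
      have h7 : |C * A| ≤ |C| := by
        rw [abs_mul]; nlinarith [abs_nonneg C, abs_nonneg A]
      linarith [neg_abs_le (C * A)]
    linarith [neg_abs_le e]
  have hm_lb : 1 / (4 * f) ≤ M0 φ f := by
    rw [hm', div_le_div_iff₀ (by positivity) (by positivity)]
    have h9 : 2 * (|C| + K + 1) * f ≤ f * f := mul_le_mul_of_nonneg_right hfK hf0.le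
    have h10 : -(|C| + K) * f ≤ (C * A + e) * f := mul_le_mul_of_nonneg_right hCK hf0.le
    have h11 : (1/2) * f ^ 3 ≤ A * f ^ 3 :=
      mul_le_mul_of_nonneg_right hA_ge (by positivity)
    have h12 : 0 ≤ f * f * (f - 2) :=
      mul_nonneg (mul_nonneg hf0.le hf0.le) (by linarith)
    nlinarith [h9, h10, h11, h12]
  have hm_pos : 0 < M0 φ f := lt_of_lt_of_le (by positivity) hm_lb
  have hmne : M0 φ f ≠ 0 := ne_of_gt hm_pos
  have hid : V f - f + 1 / f * C = (A - (f - C / f) * M0 φ f) / M0 φ f := by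
    rw [hV f, ← hA_def]
    field_simp
    ring
  have hN : A - (f - C / f) * M0 φ f = (C ^ 2 * A + C * e - e * f ^ 2) / f ^ 4 := by
    rw [hm']
    field_simp
    ring
  have hNb : |C ^ 2 * A + C * e - e * f ^ 2| ≤ (C ^ 2 + |C| * K + K) * f := by
    have h6 : |C ^ 2 * A| ≤ C ^ 2 := by
      rw [abs_mul, abs_pow, sq_abs]
      nlinarith [sq_nonneg C, abs_nonneg A]
    have h7 : |C * e| ≤ |C| * K := by
      rw [abs_mul]
      exact mul_le_mul_of_nonneg_left heK (abs_nonneg C)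
    have h8 : |e * f ^ 2| ≤ K * f := by
      rw [abs_mul, abs_pow, abs_of_pos hf0]
      calc |e| * f ^ 2 ≤ (K / f) * f ^ 2 := by
            apply mul_le_mul_of_nonneg_right he (by positivity)
        _ = K * f := by field_simp
    calc |C ^ 2 * A + C * e - e * f ^ 2|
        ≤ |C ^ 2 * A + C * e| + |e * f ^ 2| := abs_sub _ _
      _ ≤ |C ^ 2 * A| + |C * e| + |e * f ^ 2| := by linarith [abs_add_le (C ^ 2 * A) (C * e)]
      _ ≤ (C ^ 2 + |C| * K + K) * f := by
          nlinarith [mul_nonneg (sq_nonneg C) (by linarith : (0:ℝ) ≤ f - 1),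
            mul_nonneg (mul_nonneg (abs_nonneg C) hK0) (by linarith : (0:ℝ) ≤ f - 1)]
  have hfinal : |V f - f + 1 / f * C| ≤ 4 * (C ^ 2 + |C| * K + K) * (1 / f ^ 2) := by
    rw [hid, hN, abs_div, abs_of_pos hm_pos, abs_div, abs_of_pos (show (0:ℝ) < f ^ 4 by positivity)]
    have hnum : |C ^ 2 * A + C * e - e * f ^ 2| / f ^ 4 ≤ (C ^ 2 + |C| * K + K) / f ^ 3 := by
      rw [div_le_div_iff₀ (by positivity) (by positivity)]
      calc |C ^ 2 * A + C * e - e * f ^ 2| * f ^ 3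
          ≤ ((C ^ 2 + |C| * K + K) * f) * f ^ 3 := by
            apply mul_le_mul_of_nonneg_right hNb (by positivity)
        _ = (C ^ 2 + |C| * K + K) * f ^ 4 := by ring
    calc |C ^ 2 * A + C * e - e * f ^ 2| / f ^ 4 / M0 φ f
        ≤ ((C ^ 2 + |C| * K + K) / f ^ 3) / (1 / (4 * f)) := by
          apply div_le_div₀ (by positivity) hnum (by positivity) hm_lb
      _ = 4 * (C ^ 2 + |C| * K + K) * (1 / f ^ 2) := by
          field_simp
  rw [Real.norm_eq_abs, Real.norm_eq_abs, abs_of_pos (show (0:ℝ) < 1 / f ^ 2 by positivity)]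
  calc |V f - f + 1 / f * C| ≤ 4 * (C ^ 2 + |C| * K + K) * (1 / f ^ 2) := hfinal
    _ = 4 * (C ^ 2 + |C| * K + K) * (1 / f ^ 2) := rfl
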